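/- Let p be a prime number. The quotient ring ℤ⟦t⟧/⟨p − t⟩ is isomorphic to the ring ℤ_p of p-adic integers, via the map induced by evaluating t at p. -/

import Mathlib

open PowerSeries Finset Filter

variable {p : ℕ} [hp : Fact p.Prime]

private lemma padic_norm_term_le (a : ℤ) (n : ℕ) :
    ‖(a : ℤ_[p]) * (p : ℤ_[p]) ^ n‖ ≤ ((p : ℝ)⁻¹) ^ n := by
  calc ‖(a : ℤ_[p]) * (p : ℤ_[p]) ^ n‖ ≤ ‖(a : ℤ_[p])‖ * ‖(p : ℤ_[p]) ^ n‖ := norm_mul_le _ _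
    _ ≤ 1 * ‖(p : ℤ_[p]) ^ n‖ := by
        gcongr; exact PadicInt.norm_le_one _
    _ = ((p : ℝ)⁻¹) ^ n := by
        rw [one_mul, PadicInt.norm_p_pow, zpow_neg, zpow_natCast, inv_pow]

private lemma padic_inv_lt_one : ((p : ℝ)⁻¹) < 1 := by
  rw [inv_lt_one_iff₀]
  right
  exact_mod_cast hp.1.one_lt

private lemma padic_summable_norm (f : ℕ → ℤ) :
    Summable (fun n : ℕ => ‖(f n : ℤ_[p]) * (p : ℤ_[p]) ^ n‖) := by
  apply Summable.of_nonneg_of_le (fun n => norm_nonneg _)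
    (fun n => padic_norm_term_le (f n) n)
  exact summable_geometric_of_lt_one (by positivity) padic_inv_lt_one

private lemma padic_summable (f : ℕ → ℤ) :
    Summable (fun n : ℕ => (f n : ℤ_[p]) * (p : ℤ_[p]) ^ n) :=
  (padic_summable_norm f).of_norm

/-- Evaluation of an integer power series at `p`. -/
noncomputable def padicEval (p : ℕ) [hp : Fact p.Prime] : PowerSeries ℤ →+* ℤ_[p] where
  toFun f := ∑' n : ℕ, ((PowerSeries.coeff (R := ℤ) n f : ℤ_[p]) * (p : ℤ_[p]) ^ n)
  map_one' := by
    rw [tsum_eq_single 0 (fun n hn => by simp [PowerSeries.coeff_one, hn])]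
    simp
  map_mul' f g := by
    rw [tsum_mul_tsum_eq_tsum_sum_antidiagonal_of_summable_norm
      (padic_summable_norm _) (padic_summable_norm _)]
    refine tsum_congr fun n => ?_
    rw [PowerSeries.coeff_mul]
    push_cast
    rw [Finset.sum_mul]
    refine Finset.sum_congr rfl fun kl hkl => ?_
    rw [← Finset.HasAntidiagonal.mem_antidiagonal.mp hkl, pow_add]
    ring
  map_zero' := by simp
  map_add' f g := by
    rw [← Summable.tsum_add (padic_summable _) (padic_summable _)]
    refine tsum_congr fun n => ?_
    rw [map_add]
    push_cast
    ring

lemma padicEval_apply (f : PowerSeries ℤ) :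
    padicEval p f = ∑' n : ℕ, ((PowerSeries.coeff (R := ℤ) n f : ℤ_[p]) * (p : ℤ_[p]) ^ n) := rfl

lemma padicEval_surjective : Function.Surjective (padicEval p) := by
  intro x
  set a : ℕ → ℤ := fun n => ((x.appr (n + 1) - x.appr n) / p ^ n : ℕ) with ha
  refine ⟨PowerSeries.mk a, ?_⟩
  have key : ∀ N : ℕ, (∑ i ∈ Finset.range N, (a i : ℤ_[p]) * (p : ℤ_[p]) ^ i)
      = (x.appr N : ℤ_[p]) := by
    intro N
    have step : ∀ i : ℕ, (a i : ℤ_[p]) * (p : ℤ_[p]) ^ i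
        = (x.appr (i + 1) : ℤ_[p]) - (x.appr i : ℤ_[p]) := by
      intro i
      have hd : p ^ i ∣ x.appr (i + 1) - x.appr i :=
        PadicInt.dvd_appr_sub_appr x i (i + 1) (by omega)
      have hmono := PadicInt.appr_mono x (show i ≤ i + 1 by omega)
      have h1 : (a i : ℤ_[p]) = (((x.appr (i + 1) - x.appr i) / p ^ i : ℕ) : ℤ_[p]) := by
        rw [ha]; exact_mod_cast rfl
      rw [h1, show ((p : ℤ_[p]) ^ i) = ((p ^ i : ℕ) : ℤ_[p]) by push_cast; rfl,
        ← Nat.cast_mul, Nat.div_mul_cancel hd, Nat.cast_sub hmono]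
    simp only [step, Finset.sum_range_sub (fun n => ((x.appr n : ℤ_[p])))]
    simp [PadicInt.appr]
  have h1 : Tendsto (fun N => ∑ i ∈ Finset.range N,
      ((PowerSeries.coeff (R := ℤ) i (PowerSeries.mk a) : ℤ_[p]) * (p : ℤ_[p]) ^ i))
      atTop (nhds (padicEval p (PowerSeries.mk a))) :=
    (padic_summable _).hasSum.tendsto_sum_nat
  have h2 : Tendsto (fun N => ∑ i ∈ Finset.range N,
      ((PowerSeries.coeff (R := ℤ) i (PowerSeries.mk a) : ℤ_[p]) * (p : ℤ_[p]) ^ i))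
      atTop (nhds x) := by
    simp only [PowerSeries.coeff_mk, key]
    rw [tendsto_iff_norm_sub_tendsto_zero]
    apply squeeze_zero (fun N => norm_nonneg _) (g := fun N => ((p : ℝ)⁻¹) ^ N)
    · intro N
      have hs := PadicInt.appr_spec N x
      rw [← PadicInt.norm_le_pow_iff_mem_span_pow] at hs
      rw [← norm_neg, neg_sub]
      calc ‖x - (x.appr N : ℤ_[p])‖ ≤ (p : ℝ) ^ (-(N : ℤ)) := hs
        _ = ((p : ℝ)⁻¹) ^ N := by rw [zpow_neg, zpow_natCast, inv_pow]
    · exact tendsto_pow_atTop_nhds_zero_of_lt_one (by positivity) padic_inv_lt_one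
  exact tendsto_nhds_unique h1 h2

lemma padicEval_ker :
    RingHom.ker (padicEval p) = Ideal.span {(p : PowerSeries ℤ) - PowerSeries.X} := by
  have hpX : padicEval p ((p : PowerSeries ℤ) - PowerSeries.X) = 0 := by
    rw [map_sub, map_natCast]
    have hX : padicEval p PowerSeries.X = (p : ℤ_[p]) := by
      rw [padicEval_apply, tsum_eq_single 1 (fun n hn => by
        simp [PowerSeries.coeff_X, hn])]
      simp [PowerSeries.coeff_X]
    rw [hX, sub_self]
  apply le_antisymm
  · intro f hf
    rw [RingHom.mem_ker, padicEval_apply] at hf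
    set a : ℕ → ℤ := fun n => PowerSeries.coeff (R := ℤ) n f with ha
    have hdvd : ∀ n : ℕ, (p : ℤ) ^ (n + 1) ∣ ∑ i ∈ Finset.range (n + 1), a i * p ^ i := by
      intro n
      rw [← PadicInt.pow_p_dvd_int_iff]
      have hsplit := Summable.sum_add_tsum_nat_add (n + 1) (padic_summable (p := p) a)
      rw [hf] at hsplit
      have hcast : ((∑ i ∈ Finset.range (n + 1), a i * (p : ℤ) ^ i : ℤ) : ℤ_[p])
          = ∑ i ∈ Finset.range (n + 1), (a i : ℤ_[p]) * (p : ℤ_[p]) ^ i := by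
        push_cast; rfl
      rw [hcast, eq_neg_of_add_eq_zero_left hsplit]
      have htail : ∑' i : ℕ, (a (i + (n + 1)) : ℤ_[p]) * (p : ℤ_[p]) ^ (i + (n + 1))
          = (∑' i : ℕ, (a (i + (n + 1)) : ℤ_[p]) * (p : ℤ_[p]) ^ i) * (p : ℤ_[p]) ^ (n + 1) := by
        rw [← (padic_summable (p := p) (fun i => a (i + (n + 1)))).tsum_mul_right
          ((p : ℤ_[p]) ^ (n + 1))]
        exact tsum_congr fun i => by rw [pow_add]; ring
      rw [htail]
      exact dvd_neg.mpr (dvd_mul_left _ _)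
    choose c hc using hdvd
    rw [Ideal.mem_span_singleton]
    refine ⟨PowerSeries.mk c, ?_⟩
    have hC : (p : PowerSeries ℤ) = PowerSeries.C (R := ℤ) (p : ℤ) := (map_natCast (C (R := ℤ)) p).symm
    ext n
    rw [sub_mul, map_sub, hC, PowerSeries.coeff_C_mul]
    cases n with
    | zero =>
      rw [PowerSeries.coeff_zero_X_mul, PowerSeries.coeff_mk, sub_zero]
      have h0 := hc 0
      simp only [Finset.sum_range_one, pow_zero, mul_one, zero_add, pow_one] at h0
      rw [show PowerSeries.coeff (R := ℤ) 0 f = a 0 from rfl, h0]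
    | succ n =>
      rw [PowerSeries.coeff_succ_X_mul, PowerSeries.coeff_mk, PowerSeries.coeff_mk]
      have h1 := hc (n + 1)
      rw [Finset.sum_range_succ, hc n] at h1
      have hp0 : ((p : ℤ)) ^ (n + 1) ≠ 0 :=
        pow_ne_zero _ (by exact_mod_cast hp.1.ne_zero)
      have key : a (n + 1) * (p : ℤ) ^ (n + 1)
          = ((p : ℤ) * c (n + 1) - c n) * (p : ℤ) ^ (n + 1) := by
        linear_combination h1
      have := mul_right_cancel₀ hp0 key
      rw [show PowerSeries.coeff (R := ℤ) (n + 1) f = a (n + 1) from rfl, this]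
  · rw [Ideal.span_le, Set.singleton_subset_iff]
    exact hpX

theorem powerSeries_quotient_iso_padicInt (p : ℕ) [Fact p.Prime] :
    ∃ φ : PowerSeries ℤ →+* ℤ_[p],
      (∀ f : PowerSeries ℤ,
        φ f = ∑' n : ℕ, ((PowerSeries.coeff (R := ℤ) n f : ℤ_[p]) * (p : ℤ_[p]) ^ n)) ∧
      Function.Surjective φ ∧
      RingHom.ker φ = Ideal.span {(p : PowerSeries ℤ) - PowerSeries.X} := by
  exact ⟨padicEval p, padicEval_apply, padicEval_surjective, padicEval_ker⟩
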